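/- Consider the 2×2 block matrix Σ(Δ) with blocks Σ_RR = Δ·a, Σ_RS = Σ_SR^T = (Δ²/2)·a·Cᵀ, Σ_SS = (Δ³/3)·C·a·Cᵀ, where a is a symmetric positive definite d_R×d_R matrix and C is a d_S×d_R matrix of full row rank d_S. Then Σ(Δ) is positive definite for every Δ > 0. -/

import Mathlib

open Matrix

private lemma posDef_smul_aux {n : Type*} [Fintype n] {M : Matrix n n ℝ} (hM : M.PosDef)
    {c : ℝ} (hc : 0 < c) : (c • M).PosDef := by
  refine PosDef.of_dotProduct_mulVec_pos ?_ (fun x hx => ?_)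
  · show (c • M)ᴴ = c • M
    rw [conjTranspose_smul, star_trivial, hM.1.eq]
  · have := hM.dotProduct_mulVec_pos hx
    simpa [Matrix.smul_mulVec, dotProduct_smul] using mul_pos hc this

private lemma posDef_conj_aux {n m : Type*} [Fintype n] [Fintype m] {a : Matrix n n ℝ}
    (ha : a.PosDef) (B : Matrix m n ℝ) (hB : Function.Injective Bᵀ.mulVec) :
    (B * a * Bᵀ).PosDef := by
  have hBt : Bᵀ = Bᴴ := by ext i j; simp [conjTranspose_apply]
  refine PosDef.of_dotProduct_mulVec_pos ?_ (fun x hx => ?_)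
  · rw [hBt]; exact (ha.posSemidef.mul_mul_conjTranspose_same B).1
  · have hx' : Bᵀ *ᵥ x ≠ 0 := fun h => hx (hB (by simpa using h))
    have hpos := ha.dotProduct_mulVec_pos hx'
    have key : star x ⬝ᵥ (B * a * Bᵀ) *ᵥ x = star (Bᵀ *ᵥ x) ⬝ᵥ a *ᵥ (Bᵀ *ᵥ x) := by
      simp only [star_trivial, ← mulVec_mulVec]
      rw [dotProduct_mulVec x B, ← mulVec_transpose]
    rw [key]; exact hpos

private lemma mulVec_injective_aux {dS dR : ℕ} (C : Matrix (Fin dS) (Fin dR) ℝ)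
    (hC : C.rank = dS) : Function.Injective Cᵀ.mulVec := by
  have hrk : Cᵀ.rank = dS := by rw [Matrix.rank_transpose]; exact hC
  have h1 : LinearMap.ker Cᵀ.mulVecLin = ⊥ := by
    have := Cᵀ.mulVecLin.finrank_range_add_finrank_ker
    rw [show Module.finrank ℝ (LinearMap.range Cᵀ.mulVecLin) = dS from hrk] at this
    simp only [Module.finrank_pi, Fintype.card_fin] at this
    exact Submodule.finrank_eq_zero.mp (by omega)
  intro x y hxy
  have h2 : Cᵀ.mulVecLin (x - y) = 0 := by
    rw [mulVecLin_apply, Matrix.mulVec_sub, hxy, sub_self]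
  have := h1 ▸ (LinearMap.mem_ker.mpr h2)
  simpa [sub_eq_zero] using this

private lemma posDef_fromBlocks_aux {m n : Type*} [Fintype m] [DecidableEq m] [Fintype n]
    {A : Matrix m m ℝ} (B : Matrix m n ℝ) {D : Matrix n n ℝ}
    (hA : A.PosDef) [Invertible A] (hS : (D - Bᴴ * A⁻¹ * B).PosDef) :
    (fromBlocks A B Bᴴ D).PosDef := by
  refine PosDef.of_dotProduct_mulVec_pos ((Matrix.IsHermitian.fromBlocks₁₁ B D hA.1).mpr hS.1) (fun x hx => ?_)
  set u := x ∘ Sum.inl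
  set v := x ∘ Sum.inr
  have hxuv : Sum.elim u v = x := Sum.elim_comp_inl_inr x
  rw [← hxuv, Matrix.dotProduct_mulVec,
    Matrix.schur_complement_eq₁₁ B D u v hA.1]
  by_cases hv : v = 0
  · have hu : u ≠ 0 := by
      intro hu
      apply hx
      rw [← hxuv, hu, hv]; ext (i|i) <;> rfl
    have h2 : star v ᵥ* (D - Bᴴ * A⁻¹ * B) ⬝ᵥ v = 0 := by
      simp [hv]
    have h1 : 0 < star (u + (A⁻¹ * B) *ᵥ v) ᵥ* A ⬝ᵥ (u + (A⁻¹ * B) *ᵥ v) := by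
      rw [hv]
      have h := hA.dotProduct_mulVec_pos hu
      rw [Matrix.dotProduct_mulVec] at h
      simpa using h
    rw [h2]; linarith
  · have h2 : 0 < star v ᵥ* (D - Bᴴ * A⁻¹ * B) ⬝ᵥ v := by
      have h := hS.dotProduct_mulVec_pos hv
      rwa [Matrix.dotProduct_mulVec] at h
    have h1 : 0 ≤ star (u + (A⁻¹ * B) *ᵥ v) ᵥ* A ⬝ᵥ (u + (A⁻¹ * B) *ᵥ v) := by
      have h := hA.posSemidef.dotProduct_mulVec_nonneg (u + (A⁻¹ * B) *ᵥ v)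
      rwa [Matrix.dotProduct_mulVec] at h
    linarith

/-- with `a` symmetric positive definite `d_R×d_R` and `C` a `d_S×d_R`
matrix of full row rank `d_S`, the block matrix `Σ(Δ)` with blocks
`Σ_RR = Δ·a`, `Σ_RS = Σ_SRᵀ = (Δ²/2)·a·Cᵀ`, `Σ_SS = (Δ³/3)·C·a·Cᵀ`
is positive definite for every `Δ > 0`. -/
theorem stmt9 (dR dS : ℕ) (a : Matrix (Fin dR) (Fin dR) ℝ) (ha : a.PosDef)
    (C : Matrix (Fin dS) (Fin dR) ℝ) (hC : C.rank = dS) (Δ : ℝ) (hΔ : 0 < Δ) :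
    (Matrix.fromBlocks
        (Δ • a) ((Δ ^ 2 / 2) • (a * Cᵀ))
        (((Δ ^ 2 / 2) • (a * Cᵀ))ᵀ) ((Δ ^ 3 / 3) • (C * a * Cᵀ))).PosDef := by
  set A : Matrix (Fin dR) (Fin dR) ℝ := Δ • a with hA_def
  set B : Matrix (Fin dR) (Fin dS) ℝ := (Δ ^ 2 / 2) • (a * Cᵀ) with hB_def
  set D : Matrix (Fin dS) (Fin dS) ℝ := (Δ ^ 3 / 3) • (C * a * Cᵀ) with hD_def
  have hA : A.PosDef := posDef_smul_aux ha hΔ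
  haveI : Invertible A := hA.isUnit.invertible
  have hBH : Bᵀ = Bᴴ := by ext i j; simp [conjTranspose_apply]
  have haT : aᵀ = a := by
    have := ha.1.eq
    simpa [conjTranspose_eq_transpose_of_trivial] using this
  have hinvB : A⁻¹ * B = (Δ / 2) • Cᵀ := by
    have : A * ((Δ / 2) • Cᵀ) = B := by
      rw [hA_def, hB_def, Matrix.smul_mul, Matrix.mul_smul, smul_smul]
      congr 1
      ring
    rw [← this, Matrix.inv_mul_cancel_left_of_invertible]
  have hSchur : D - Bᴴ * A⁻¹ * B = (Δ ^ 3 / 12) • (C * a * Cᵀ) := by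
    rw [← hBH, Matrix.mul_assoc, hinvB]
    have hBt : Bᵀ = (Δ ^ 2 / 2) • (C * a) := by
      rw [hB_def, Matrix.transpose_smul, Matrix.transpose_mul, Matrix.transpose_transpose, haT]
    rw [hBt, hD_def, Matrix.smul_mul, Matrix.mul_smul, smul_smul,
      ← sub_smul]
    congr 1
    ring
  have hCaCt : (C * a * Cᵀ).PosDef := posDef_conj_aux ha C (mulVec_injective_aux C hC)
  have hS : (D - Bᴴ * A⁻¹ * B).PosDef := by
    rw [hSchur]
    exact posDef_smul_aux hCaCt (by positivity)
  have := posDef_fromBlocks_aux B hA hS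
  rwa [← hBH] at this
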